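/- arXiv:1712.01605 — 2 statements merged into one kernel-verified Lean document; each statement's English description precedes it below -/
import Mathlib

section
/- Let A be a simplicial ℓ-arrangement in ℝ^ℓ, K a chamber with basis B^K = {α_1,…,α_ℓ}, and i ≠ j. Then c^K_{ij} = c^K_{ji} = 0 if and only if |A_{α_i^⊥ ∩ α_j^⊥}| = 2. Furthermore, if |A_{α_i^⊥ ∩ α_j^⊥}| = 3 then c^K_{ji} = 1/c^K_{ij}; in particular, if c^K_{ij} = −1 then c^K_{ji} = −1. -/
open scoped Classical

noncomputable section

section Alg

variable {K : Type*} [Field K] {V : Type*} [AddCommGroup V] [Module K V]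

/-- `H` is a linear hyperplane of `V`, i.e. the kernel of a nonzero linear functional. -/
def IsLinHyperplane (H : Submodule K V) : Prop :=
  ∃ f : V →ₗ[K] K, f ≠ 0 ∧ H = LinearMap.ker f

/-- The intersection lattice `L(A)` of an arrangement `A`:
all intersections of subsets of `A` (the empty intersection being `⊤ = V`). -/
def interLat (A : Finset (Submodule K V)) : Finset (Submodule K V) :=
  A.powerset.image fun S => S.inf id

/-- The localization `A_X = {H ∈ A | X ⊆ H}`. -/
def locArr (A : Finset (Submodule K V)) (X : Submodule K V) : Finset (Submodule K V) :=
  A.filter fun H => X ≤ H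

/-- The restriction `A^X = {X ∩ H | H ∈ A, X ⊄ H}`, as an arrangement in `X`. -/
def resArr (A : Finset (Submodule K V)) (X : Submodule K V) : Finset (Submodule K ↥X) :=
  (A.filter fun H => ¬ X ≤ H).image fun H => H.comap X.subtype

/-- The quotient arrangement `A_X / X = {H/X | H ∈ A, X ⊆ H}` in `V ⧸ X`. -/
def quotArr (A : Finset (Submodule K V)) (X : Submodule K V) : Finset (Submodule K (V ⧸ X)) :=
  (A.filter fun H => X ≤ H).image fun H => H.map X.mkQ

/-- `X` is a modular element of the intersection lattice of `A`. -/
def IsModularFlat (A : Finset (Submodule K V)) (X : Submodule K V) : Prop :=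
  X ∈ interLat A ∧ ∀ Y ∈ interLat A, X ⊔ Y ∈ interLat A

/-- `A` is supersolvable: its intersection lattice contains a maximal chain
`V = X_0 > X_1 > … > X_ℓ` of modular elements (`X_i` of codimension `i`). -/
def IsSupersolvableArr (A : Finset (Submodule K V)) : Prop :=
  ∃ c : ℕ → Submodule K V,
    (∀ i ≤ Module.finrank K V, IsModularFlat A (c i)) ∧
    (∀ i ≤ Module.finrank K V, Module.finrank K (V ⧸ c i) = i) ∧
    ∀ i < Module.finrank K V, c (i + 1) < c i

/-- `A` is reducible: it decomposes as a product along a nontrivial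
direct sum decomposition `V = V₁ ⊕ V₂` (each hyperplane contains `V₁` or `V₂`). -/
def IsReducibleArr (A : Finset (Submodule K V)) : Prop :=
  ∃ V₁ V₂ : Submodule K V, V₁ ≠ ⊥ ∧ V₂ ≠ ⊥ ∧ IsCompl V₁ V₂ ∧
    ∀ H ∈ A, V₁ ≤ H ∨ V₂ ≤ H

/-- `A` and `B` are linearly isomorphic arrangements in `V`. -/
def LinIsoArr (A B : Finset (Submodule K V)) : Prop :=
  ∃ φ : V ≃ₗ[K] V, B = A.image fun H => H.map (φ : V →ₗ[K] V)

/-- `A` and `B` are lattice equivalent: their intersection lattices are isomorphic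
as posets (equivalently, as lattices). -/
def LatEquivArr {V₂ : Type*} [AddCommGroup V₂] [Module K V₂]
    (A : Finset (Submodule K V)) (B : Finset (Submodule K V₂)) : Prop :=
  ∃ e : {X // X ∈ interLat A} ≃ {Y // Y ∈ interLat B},
    ∀ X Y : {X // X ∈ interLat A},
      (X : Submodule K V) ≤ (Y : Submodule K V) ↔
        (e X : Submodule K V₂) ≤ (e Y : Submodule K V₂)

/-- The product of the arrangements `A` in `V` and `B` in `V₂`, in `V × V₂`. -/
def prodArr {V₂ : Type*} [AddCommGroup V₂] [Module K V₂]
    (A : Finset (Submodule K V)) (B : Finset (Submodule K V₂)) :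
    Finset (Submodule K (V × V₂)) :=
  A.image (fun H => H.prod (⊤ : Submodule K V₂)) ∪
    B.image fun H => (⊤ : Submodule K V).prod H

end Alg

section Moebius

variable {K : Type*} [Field K] {V : Type*} [AddCommGroup V] [Module K V]
  [FiniteDimensional K V]

/-- The Möbius function of the intersection lattice of `A`:
`μ(V) = 1` and `μ(X) = - ∑_{Y ⊋ X, Y ∈ L(A)} μ(Y)` for `X ≠ V`. -/
def arrMoebius [FiniteDimensional K V] (A : Finset (Submodule K V)) (X : Submodule K V) : ℤ :=
  if X = ⊤ then 1
  else - ∑ Y ∈ ((interLat A).filter fun Y => X < Y).attach, arrMoebius A Y.1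
termination_by Module.finrank K V - Module.finrank K ↥X
decreasing_by
  have hY := (Finset.mem_filter.mp Y.2).2
  have h1 : Module.finrank K ↥X < Module.finrank K ↥(Y.1) :=
    Submodule.finrank_lt_finrank_of_lt hY
  have h2 : Module.finrank K ↥(Y.1) ≤ Module.finrank K V := Submodule.finrank_le _
  omega

/-- The characteristic polynomial `χ_A(t) = ∑_{X ∈ L(A)} μ(X) t^{dim X}`,
evaluated at the integer `t`. -/
def charPolyAt (A : Finset (Submodule K V)) (t : ℤ) : ℤ :=
  ∑ X ∈ interLat A, arrMoebius A X * t ^ Module.finrank K ↥X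

/-- The invariant `s(A) = ℓ⋅|χ_A(-1)| - 2 ∑_{H ∈ A} |χ_{A^H}(-1)|`. -/
def sInvariant (A : Finset (Submodule K V)) : ℤ :=
  (Module.finrank K V : ℤ) * |charPolyAt A (-1)| -
    2 * ∑ H ∈ A, |charPolyAt (resArr A H) (-1)|

end Moebius

section Top

variable {V : Type*} [AddCommGroup V] [Module ℝ V]

/-- `C` is an open simplicial cone: the set of strictly positive linear
combinations of some basis of `V`. -/
def IsOpenSimplicialCone (C : Set V) : Prop :=
  ∃ b : Module.Basis (Fin (Module.finrank ℝ V)) ℝ V,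
    C = {v | ∃ c : Fin (Module.finrank ℝ V) → ℝ, (∀ i, 0 < c i) ∧ v = ∑ i, c i • b i}

variable [TopologicalSpace V]

/-- `C` is a chamber of `A`: a connected component of the complement of the
union of the hyperplanes of `A`. -/
def IsChamberOf (A : Finset (Submodule ℝ V)) (C : Set V) : Prop :=
  ∃ x ∈ (⋃ H ∈ A, (H : Set V))ᶜ, C = connectedComponentIn ((⋃ H ∈ A, (H : Set V))ᶜ) x

/-- `A` is a simplicial arrangement: every chamber is an open simplicial cone. -/
def IsSimplicialArr (A : Finset (Submodule ℝ V)) : Prop :=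
  ∀ C : Set V, IsChamberOf A C → IsOpenSimplicialCone C

/-- `H` is a wall of the chamber `C`: a hyperplane of `A` meeting the closure
of `C` in a set of dimension `dim V - 1`. -/
def IsWallOf (A : Finset (Submodule ℝ V)) (C : Set V) (H : Submodule ℝ V) : Prop :=
  H ∈ A ∧
    Module.finrank ℝ ↥(Submodule.span ℝ ((H : Set V) ∩ closure C)) + 1 = Module.finrank ℝ V

/-- `α` is a basis for the chamber `C`: a family of linear forms, one vanishing on
each wall of `C`, with `C = ⋂ᵢ {αᵢ > 0}`. -/
def IsChamberBasis {ℓ : ℕ} (A : Finset (Submodule ℝ V)) (C : Set V)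
    (α : Fin ℓ → (V →ₗ[ℝ] ℝ)) : Prop :=
  (∀ i, IsWallOf A C (LinearMap.ker (α i))) ∧
  (∀ H, IsWallOf A C H → ∃ i, H = LinearMap.ker (α i)) ∧
  (Function.Injective fun i => LinearMap.ker (α i)) ∧
  C = ⋂ i, {v | 0 < α i v}

/-- `C'` is the chamber adjacent to `C` across the wall `H`:
the common wall is `H = ⟨closure C ∩ closure C'⟩`. -/
def IsAdjChamber (A : Finset (Submodule ℝ V)) (C C' : Set V) (H : Submodule ℝ V) : Prop :=
  IsChamberOf A C' ∧ C' ≠ C ∧ Submodule.span ℝ (closure C ∩ closure C') = H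

/-- The Coxeter graph of a chamber with basis `α`: vertices `1, …, ℓ`, with an edge
`{i, j}` whenever `|A_{αᵢ^⊥ ∩ αⱼ^⊥}| ≥ 3`. -/
def coxGraph {ℓ : ℕ} (A : Finset (Submodule ℝ V)) (α : Fin ℓ → (V →ₗ[ℝ] ℝ)) :
    SimpleGraph (Fin ℓ) :=
  SimpleGraph.fromRel fun i j =>
    3 ≤ (locArr A (LinearMap.ker (α i) ⊓ LinearMap.ker (α j))).card

end Top

section Concrete

/-- The `i`-th coordinate functional on `ℝ^ℓ`. -/
def coordFn (ℓ : ℕ) (i : Fin ℓ) : (Fin ℓ → ℝ) →ₗ[ℝ] ℝ := LinearMap.proj i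

/-- The essential braid arrangement `A(A_ℓ)` in `ℝ^ℓ`:
`{ker(xᵢ - xⱼ) | i < j} ∪ {ker xᵢ}` (the braid arrangement of `ℝ^{ℓ+1}` made essential). -/
def braidArr (ℓ : ℕ) : Finset (Submodule ℝ (Fin ℓ → ℝ)) :=
  ((Finset.univ : Finset (Fin ℓ × Fin ℓ)).filter fun p => p.1 < p.2).image
      (fun p => LinearMap.ker (coordFn ℓ p.1 - coordFn ℓ p.2)) ∪
    (Finset.univ : Finset (Fin ℓ)).image fun i => LinearMap.ker (coordFn ℓ i)

/-- The reflection arrangement `A(C_ℓ)` in `ℝ^ℓ`: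
`{ker(xᵢ - xⱼ), ker(xᵢ + xⱼ) | i < j} ∪ {ker xᵢ}`. -/
def typeCArr (ℓ : ℕ) : Finset (Submodule ℝ (Fin ℓ → ℝ)) :=
  ((Finset.univ : Finset (Fin ℓ × Fin ℓ)).filter fun p => p.1 < p.2).image
      (fun p => LinearMap.ker (coordFn ℓ p.1 - coordFn ℓ p.2)) ∪
  ((Finset.univ : Finset (Fin ℓ × Fin ℓ)).filter fun p => p.1 < p.2).image
      (fun p => LinearMap.ker (coordFn ℓ p.1 + coordFn ℓ p.2)) ∪
    (Finset.univ : Finset (Fin ℓ)).image fun i => LinearMap.ker (coordFn ℓ i)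

/-- The linear functional on `ℝ³` with coefficient vector `(a, b, c)`. -/
def fn3 (a b c : ℝ) : (Fin 3 → ℝ) →ₗ[ℝ] ℝ :=
  a • coordFn 3 0 + b • coordFn 3 1 + c • coordFn 3 2

/-- The arrangement `A(2n, 1)` in `ℝ³`, with normal vectors
`(-sin(πk/n), cos(πk/n), 0)` for `k = 0, …, n-1` and
`(cos(π(2j+1)/n), sin(π(2j+1)/n), 1)` for `j = 0, …, n-1`. -/
def A2n1Arr (n : ℕ) : Finset (Submodule ℝ (Fin 3 → ℝ)) :=
  (Finset.range n).image (fun k =>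
      LinearMap.ker (fn3 (-Real.sin (Real.pi * (k : ℝ) / (n : ℝ)))
        (Real.cos (Real.pi * (k : ℝ) / (n : ℝ))) 0)) ∪
    (Finset.range n).image fun j =>
      LinearMap.ker (fn3 (Real.cos (Real.pi * (2 * (j : ℝ) + 1) / (n : ℝ)))
        (Real.sin (Real.pi * (2 * (j : ℝ) + 1) / (n : ℝ))) 1)

/-- The arrangement `A(4m+1, 1) = A(4m, 1) ∪ {(0,0,1)^⊥}` in `ℝ³`. -/
def A4m1Arr (m : ℕ) : Finset (Submodule ℝ (Fin 3 → ℝ)) :=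
  insert (LinearMap.ker (fn3 0 0 1)) (A2n1Arr (2 * m))

end Concrete

end

open LinearMap Module

section AuxCD
variable {ℓ : ℕ}

lemma aux_ker_le {f g : (Fin ℓ → ℝ) →ₗ[ℝ] ℝ} (hf : f ≠ 0)
    (h : ker f ≤ ker g) : ∃ c : ℝ, g = c • f := by
  obtain ⟨v, hv⟩ : ∃ v, f v ≠ 0 := by
    by_contra hc; push_neg at hc
    exact hf (LinearMap.ext fun v => by simp [hc v])
  set v' := (f v)⁻¹ • v with hv'
  have hfv' : f v' = 1 := by simp [hv', inv_mul_cancel₀ hv]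
  refine ⟨g v', LinearMap.ext fun u => ?_⟩
  have hm : u - f u • v' ∈ ker f := by
    simp [LinearMap.mem_ker, hfv']
  have h2 : g (u - f u • v') = 0 := h hm
  simp only [map_sub, map_smul, smul_eq_mul] at h2
  simp only [LinearMap.smul_apply, smul_eq_mul]
  linarith

lemma aux_ker_eq {f g : (Fin ℓ → ℝ) →ₗ[ℝ] ℝ} (hf : f ≠ 0) (hg : g ≠ 0)
    (h : ker f ≤ ker g) : ker f = ker g := by
  obtain ⟨c, rfl⟩ := aux_ker_le hf h
  have hc : c ≠ 0 := by rintro rfl; simp at hg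
  rw [ker_smul f c hc]

lemma aux_smul_ne {f g : (Fin ℓ → ℝ) →ₗ[ℝ] ℝ} (hf : f ≠ 0)
    (hk : ker f ≠ ker g) (d : ℝ) : f ≠ d • g := by
  rintro rfl
  have hd : d ≠ 0 := by rintro rfl; simp at hf
  exact hk (ker_smul g d hd)

lemma aux_indep {f g : (Fin ℓ → ℝ) →ₗ[ℝ] ℝ} (hf : f ≠ 0) (hg : g ≠ 0)
    (hk : ker f ≠ ker g) {a b : ℝ} (h : a • f + b • g = 0) : a = 0 ∧ b = 0 := by
  constructor
  · by_contra ha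
    have h1 : a • f = (-b) • g := by
      linear_combination (norm := module) h
    have h2 : f = (a⁻¹ * (-b)) • g := by
      rw [mul_smul, ← h1, smul_smul, inv_mul_cancel₀ ha, one_smul]
    exact aux_smul_ne hf hk _ h2
  · by_contra hb
    have h1 : b • g = (-a) • f := by
      linear_combination (norm := module) h
    have h2 : g = (b⁻¹ * (-a)) • f := by
      rw [mul_smul, ← h1, smul_smul, inv_mul_cancel₀ hb, one_smul]
    exact aux_smul_ne hg hk.symm _ h2

lemma aux_finrank_ker {f : (Fin ℓ → ℝ) →ₗ[ℝ] ℝ} (hf : f ≠ 0) :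
    finrank ℝ (ker f) + 1 = ℓ := by
  have h1 := LinearMap.finrank_range_add_finrank_ker f
  have h2 : finrank ℝ (LinearMap.range f) = 1 := by
    have hb : LinearMap.range f ≠ ⊥ := by simpa [LinearMap.range_eq_bot] using hf
    have hle : finrank ℝ (LinearMap.range f) ≤ 1 := by
      simpa using Submodule.finrank_le (LinearMap.range f)
    have hne : finrank ℝ (LinearMap.range f) ≠ 0 := by
      simpa [Submodule.finrank_eq_zero] using hb
    omega
  rw [h2, Module.finrank_fin_fun] at h1
  omega

lemma aux_span_two {f g β : (Fin ℓ → ℝ) →ₗ[ℝ] ℝ} (hf : f ≠ 0) (hg : g ≠ 0)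
    (hk : ker f ≠ ker g) (hβ : ker f ⊓ ker g ≤ ker β) :
    ∃ a b : ℝ, β = a • f + b • g := by
  have hnle : ¬ ker g ≤ ker f := fun h => hk (aux_ker_eq hg hf h).symm
  have hnle' : ¬ ker f ≤ ker g := fun h => hk (aux_ker_eq hf hg h)
  obtain ⟨u₀, hu₀g, hu₀f⟩ := SetLike.not_le_iff_exists.mp hnle
  obtain ⟨v₀, hv₀f, hv₀g⟩ := SetLike.not_le_iff_exists.mp hnle'
  have hfu₀ : f u₀ ≠ 0 := fun h => hu₀f (LinearMap.mem_ker.mpr h)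
  have hgv₀ : g v₀ ≠ 0 := fun h => hv₀g (LinearMap.mem_ker.mpr h)
  set u := (f u₀)⁻¹ • u₀ with hu
  set v := (g v₀)⁻¹ • v₀ with hv
  have hfu : f u = 1 := by simp [hu, inv_mul_cancel₀ hfu₀]
  have hgu : g u = 0 := by
    have h0 : g u₀ = 0 := hu₀g
    simp [hu, h0]
  have hgv : g v = 1 := by simp [hv, inv_mul_cancel₀ hgv₀]
  have hfv : f v = 0 := by
    have h0 : f v₀ = 0 := hv₀f
    simp [hv, h0]
  refine ⟨β u, β v, LinearMap.ext fun w => ?_⟩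
  have hm : w - f w • u - g w • v ∈ ker f ⊓ ker g := by
    constructor
    · simp [LinearMap.mem_ker, hfu, hfv]
    · simp [LinearMap.mem_ker, hgu, hgv]
  have h2 : β (w - f w • u - g w • v) = 0 := hβ hm
  simp only [map_sub, map_smul, smul_eq_mul] at h2
  simp only [LinearMap.add_apply, LinearMap.smul_apply, smul_eq_mul]
  linarith only [h2]

lemma aux_gen (D : Set (Fin ℓ → ℝ)) (h0 : (0 : Fin ℓ → ℝ) ∈ D)
    (hadd : ∀ w ∈ D, ∀ d ∈ D, ∀ ε : ℝ, 0 < ε → w + ε • d ∈ D)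
    (S : Finset ((Fin ℓ → ℝ) →ₗ[ℝ] ℝ)) (hS : ∀ f ∈ S, ∃ d ∈ D, f d ≠ 0) :
    ∃ w ∈ D, ∀ f ∈ S, f w ≠ 0 := by
  classical
  revert hS
  induction S using Finset.induction_on with
  | empty => intro _; exact ⟨0, h0, by simp⟩
  | @insert f S hfS ih =>
    intro hS
    obtain ⟨w, hwD, hw⟩ := ih (fun g hg => hS g (Finset.mem_insert_of_mem hg))
    obtain ⟨d, hdD, hfd⟩ := hS f (Finset.mem_insert_self f S)
    set bad : Finset ℝ := insert (-(f w) / f d) (S.image fun g => -(g w) / g d) with hbad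
    obtain ⟨ε, hε, hεbad⟩ : ∃ ε ∈ Set.Ioi (0:ℝ), ε ∉ bad :=
      Set.Infinite.exists_notMem_finset (Set.Ioi_infinite 0) bad
    rw [Set.mem_Ioi] at hε
    refine ⟨w + ε • d, hadd w hwD d hdD ε hε, ?_⟩
    intro g hg
    have hval : g (w + ε • d) = g w + ε * g d := by simp
    rw [hval]
    rcases Finset.mem_insert.mp hg with rfl | hgS
    · intro hzero
      apply hεbad
      have hεeq : ε = -(g w) / g d := by field_simp; linarith
      rw [hbad, hεeq]
      exact Finset.mem_insert_self _ _
    · intro hzero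
      by_cases hgd : g d = 0
      · rw [hgd, mul_zero, add_zero] at hzero
        exact hw g hgS hzero
      · apply hεbad
        rw [hbad]
        apply Finset.mem_insert_of_mem
        refine Finset.mem_image.mpr ⟨g, hgS, ?_⟩
        field_simp
        linarith

lemma aux_closed_ge (α : Fin ℓ → ((Fin ℓ → ℝ) →ₗ[ℝ] ℝ)) :
    IsClosed {v : Fin ℓ → ℝ | ∀ k, 0 ≤ α k v} := by
  have h : {v : Fin ℓ → ℝ | ∀ k, 0 ≤ α k v} = ⋂ k, (α k) ⁻¹' (Set.Ici 0) := by
    ext v; simp [Set.mem_iInter]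
  rw [h]
  exact isClosed_iInter fun k => isClosed_Ici.preimage (α k).continuous_of_finiteDimensional

lemma aux_closure (α : Fin ℓ → ((Fin ℓ → ℝ) →ₗ[ℝ] ℝ)) (u0 : Fin ℓ → ℝ)
    (hu0 : ∀ k, 0 < α k u0) :
    closure (⋂ k, {v : Fin ℓ → ℝ | 0 < α k v}) = {v | ∀ k, 0 ≤ α k v} := by
  apply Set.Subset.antisymm
  · refine closure_minimal ?_ (aux_closed_ge α)
    intro v hv k
    exact le_of_lt (Set.mem_iInter.mp hv k)
  · intro v hv
    rw [Metric.mem_closure_iff]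
    intro ε hε
    have hn : (0:ℝ) < ‖u0‖ + 1 := by positivity
    set t := ε / (2 * (‖u0‖ + 1)) with ht
    have htpos : 0 < t := by positivity
    refine ⟨v + t • u0, ?_, ?_⟩
    · rw [Set.mem_iInter]
      intro k
      have h1 := hv k
      have h2 := hu0 k
      simp only [Set.mem_setOf_eq, map_add, map_smul, smul_eq_mul]
      nlinarith
    · rw [dist_self_add_right, norm_smul, Real.norm_eq_abs, abs_of_pos htpos]
      have hu : ‖u0‖ < ‖u0‖ + 1 := by linarith
      have hn0 : (0:ℝ) ≤ ‖u0‖ := norm_nonneg u0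
      rw [ht]
      rw [div_mul_eq_mul_div, div_lt_iff₀ (by positivity)]
      nlinarith

lemma aux_pos (s : Set (Fin ℓ → ℝ)) (hs : IsPreconnected s)
    (g : (Fin ℓ → ℝ) →ₗ[ℝ] ℝ) (hgs : ∀ v ∈ s, g v ≠ 0) {p : Fin ℓ → ℝ}
    (hp : p ∈ s) (hgp : 0 < g p) : ∀ v ∈ s, 0 < g v := by
  intro v hv
  rcases lt_trichotomy (g v) 0 with h | h | h
  · exfalso
    have himg : IsPreconnected (g '' s) :=
      hs.image g (g.continuous_of_finiteDimensional.continuousOn)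
    have h0 : (0:ℝ) ∈ g '' s :=
      himg.Icc_subset ⟨v, hv, rfl⟩ ⟨p, hp, rfl⟩ ⟨le_of_lt h, le_of_lt hgp⟩
    obtain ⟨q, hq, hq0⟩ := h0
    exact hgs q hq hq0
  · exact absurd h (hgs v hv)
  · exact h
set_option maxHeartbeats 2000000 in
lemma aux_sign (A : Finset (Submodule ℝ (Fin ℓ → ℝ)))
    (hhyp : ∀ H ∈ A, IsLinHyperplane H)
    (α : Fin ℓ → ((Fin ℓ → ℝ) →ₗ[ℝ] ℝ))
    (hAk : ∀ k, ker (α k) ∈ A)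
    (hα0 : ∀ k, α k ≠ 0)
    (i j : Fin ℓ) (hkerij : ker (α i) ≠ ker (α j))
    (C : Set (Fin ℓ → ℝ)) (hC : IsChamberOf A C)
    (hCeq : C = ⋂ k, {v | 0 < α k v})
    (Ci : Set (Fin ℓ → ℝ)) (ci : Fin ℓ → ℝ)
    (hCi : IsAdjChamber A C Ci (ker (α i)))
    (hCieq : Ci = ⋂ k, {v | 0 < (α k - ci k • α i) v})
    (β : (Fin ℓ → ℝ) →ₗ[ℝ] ℝ) (a b : ℝ)
    (hβA : ker β ∈ A)
    (hβi : ker β ≠ ker (α i))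
    (hβC : ∀ v ∈ C, 0 < β v)
    (hab : β = a • α i + b • α j) :
    0 < b ∧ (∀ z ∈ Ci, 0 < β z) ∧ (∀ z ∈ Ci, α i z < 0) := by
  classical
  obtain ⟨x, hxM, hCx⟩ := hC
  obtain ⟨⟨xi, hxiM, hCix⟩, hCine, hspan⟩ := hCi
  set M := (⋃ H ∈ A, (H : Set (Fin ℓ → ℝ)))ᶜ with hM
  have hMmem : ∀ v : Fin ℓ → ℝ, v ∈ M ↔ ∀ H ∈ A, v ∉ H := by
    intro v; rw [hM]; simp
  have hCM : C ⊆ M := by rw [hCx]; exact connectedComponentIn_subset M x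
  have hCiM : Ci ⊆ M := by rw [hCix]; exact connectedComponentIn_subset M xi
  have hxC : x ∈ C := by rw [hCx]; exact mem_connectedComponentIn hxM
  have hxiCi : xi ∈ Ci := by rw [hCix]; exact mem_connectedComponentIn hxiM
  have hCpos : ∀ v ∈ C, ∀ k, 0 < α k v := by
    intro v hv k; rw [hCeq] at hv; exact Set.mem_iInter.mp hv k
  have hCipos : ∀ v ∈ Ci, ∀ k, 0 < (α k - ci k • α i) v := by
    intro v hv k; rw [hCieq] at hv; exact Set.mem_iInter.mp hv k
  have hclC : closure C = {v | ∀ k, 0 ≤ α k v} := by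
    rw [hCeq]
    have := aux_closure α x (fun k => hCpos x hxC k)
    rw [← hCeq]
    rw [hCeq]
    exact this
  have hclCi : closure Ci = {v | ∀ k, 0 ≤ (α k - ci k • α i) v} := by
    rw [hCieq]
    exact aux_closure _ xi (fun k => hCipos xi hxiCi k)
  set D := closure C ∩ closure Ci with hD
  have hDker : ∀ w ∈ D, α i w = 0 := by
    intro w hw
    have h1 : w ∈ Submodule.span ℝ D := Submodule.subset_span hw
    rw [hspan] at h1
    exact LinearMap.mem_ker.mp h1
  have h0D : (0 : Fin ℓ → ℝ) ∈ D := by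
    constructor
    · rw [hclC]; intro k; simp
    · rw [hclCi]; intro k; simp
  have haddD : ∀ w ∈ D, ∀ d ∈ D, ∀ ε : ℝ, 0 < ε → w + ε • d ∈ D := by
    rintro w ⟨hw1, hw2⟩ d ⟨hd1, hd2⟩ ε hε
    rw [hclC] at hw1 hd1
    rw [hclCi] at hw2 hd2
    constructor
    · rw [hclC]; intro k
      have h1 := hw1 k; have h2 := hd1 k
      simp only [Set.mem_setOf_eq, map_add, map_smul, smul_eq_mul]
      nlinarith
    · rw [hclCi]; intro k
      have h1 := hw2 k; have h2 := hd2 k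
      simp only [Set.mem_setOf_eq, map_add, map_smul, smul_eq_mul] at h1 h2 ⊢
      nlinarith
  have hch : ∀ H : Submodule ℝ (Fin ℓ → ℝ),
      ∃ f : (Fin ℓ → ℝ) →ₗ[ℝ] ℝ, H ∈ A → (f ≠ 0 ∧ H = ker f) := by
    intro H
    by_cases hH : H ∈ A
    · obtain ⟨f, h1, h2⟩ := hhyp H hH
      exact ⟨f, fun _ => ⟨h1, h2⟩⟩
    · exact ⟨0, fun h => absurd h hH⟩
  choose F hF using hch
  set S : Finset ((Fin ℓ → ℝ) →ₗ[ℝ] ℝ) := (A.erase (ker (α i))).image F with hs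
  have hSprop : ∀ f ∈ S, ∃ d ∈ D, f d ≠ 0 := by
    intro f hf
    obtain ⟨H, hH, rfl⟩ := Finset.mem_image.mp hf
    obtain ⟨hHne, hHA⟩ := Finset.mem_erase.mp hH
    obtain ⟨hF0, hFk⟩ := hF H hHA
    by_contra hcon
    push_neg at hcon
    have hDH : D ⊆ (H : Set (Fin ℓ → ℝ)) := by
      intro d hd
      rw [hFk]
      exact LinearMap.mem_ker.mpr (hcon d hd)
    have hle : ker (α i) ≤ H := by
      rw [← hspan]
      exact Submodule.span_le.mpr hDH
    have heq : ker (α i) = H := by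
      apply Submodule.eq_of_le_of_finrank_le hle
      have h1 := aux_finrank_ker (hα0 i)
      have h2 : finrank ℝ H + 1 = ℓ := by rw [hFk]; exact aux_finrank_ker hF0
      omega
    exact hHne heq.symm
  obtain ⟨w, hwD, hwS⟩ := aux_gen D h0D haddD S hSprop
  have hwnot : ∀ H ∈ A, H ≠ ker (α i) → w ∉ H := by
    intro H hHA hHne hwH
    obtain ⟨hF0, hFk⟩ := hF H hHA
    have hmem : F H ∈ S := Finset.mem_image_of_mem F (Finset.mem_erase.mpr ⟨hHne, hHA⟩)
    apply hwS (F H) hmem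
    rw [hFk] at hwH
    exact LinearMap.mem_ker.mp hwH
  have hwi : α i w = 0 := hDker w hwD
  have hwC : ∀ k, 0 ≤ α k w := by have h := hwD.1; rw [hclC] at h; exact h
  have hwCi : ∀ k, 0 ≤ (α k - ci k • α i) w := by have h := hwD.2; rw [hclCi] at h; exact h
  have hwj : 0 < α j w := by
    rcases (hwC j).lt_or_eq with h | h
    · exact h
    · exact absurd (LinearMap.mem_ker.mpr h.symm) (hwnot (ker (α j)) (hAk j) hkerij.symm)
  have hptC : ∀ t : ℝ, 0 < t → w + t • x ∈ C := by
    intro t ht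
    rw [hCeq, Set.mem_iInter]
    intro k
    have h1 := hwC k
    have h2 := hCpos x hxC k
    simp only [Set.mem_setOf_eq, map_add, map_smul, smul_eq_mul]
    nlinarith
  have hptCi : ∀ z ∈ Ci, ∀ t : ℝ, 0 < t → w + t • z ∈ Ci := by
    intro z hz t ht
    rw [hCieq, Set.mem_iInter]
    intro k
    have h1 := hwCi k
    have h2 := hCipos z hz k
    simp only [Set.mem_setOf_eq, map_add, map_smul, smul_eq_mul] at h1 h2 ⊢
    nlinarith
  have hβw0 : β w ≠ 0 := fun h => hwnot (ker β) hβA hβi (LinearMap.mem_ker.mpr h)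
  have hβwpos : 0 < β w := by
    rcases hβw0.lt_or_gt with h | h
    swap
    · exact h
    exfalso
    by_cases hbx : β x ≤ 0
    · have hk := hβC _ (hptC 1 one_pos)
      simp only [map_add, map_smul, smul_eq_mul] at hk
      nlinarith
    · push_neg at hbx
      have ht : 0 < -β w / (2 * β x) := div_pos (by linarith) (by linarith)
      have hk := hβC _ (hptC _ ht)
      simp only [map_add, map_smul, smul_eq_mul] at hk
      have heq : -β w / (2 * β x) * β x = -β w / 2 := by field_simp
      rw [heq] at hk
      linarith
  have hβweq : β w = b * α j w := by
    rw [hab]; simp [hwi]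
  have hb : 0 < b := by
    rw [hβweq] at hβwpos
    by_contra hble
    push_neg at hble
    nlinarith
  have hβCi : ∀ z ∈ Ci, 0 < β z := by
    have hpre : IsPreconnected Ci := by
      rw [hCix]; exact isPreconnected_connectedComponentIn
    have hnz : ∀ v ∈ Ci, β v ≠ 0 := by
      intro v hv h
      exact (hMmem v).mp (hCiM hv) (ker β) hβA (LinearMap.mem_ker.mpr h)
    obtain ⟨p, hpCi, hpβ⟩ : ∃ p ∈ Ci, 0 < β p := by
      by_cases hxi' : 0 ≤ β xi
      · refine ⟨w + (1:ℝ) • xi, hptCi xi hxiCi 1 one_pos, ?_⟩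
        simp only [map_add, map_smul, smul_eq_mul]
        nlinarith
      · push_neg at hxi'
        have hne : 0 < -2 * β xi := by linarith
        have ht : 0 < β w / (-2 * β xi) := div_pos hβwpos hne
        refine ⟨w + (β w / (-2 * β xi)) • xi, hptCi xi hxiCi _ ht, ?_⟩
        simp only [map_add, map_smul, smul_eq_mul]
        have hxine : β xi ≠ 0 := by linarith
        have heq : β w / (-2 * β xi) * β xi = -(β w) / 2 := by
          field_simp
        rw [heq]
        linarith
    exact aux_pos Ci hpre β hnz hpCi hpβ
  have hαiCi : ∀ z ∈ Ci, α i z < 0 := by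
    intro z hz
    have hnz : α i z ≠ 0 := by
      intro h
      exact (hMmem z).mp (hCiM hz) (ker (α i)) (hAk i) (LinearMap.mem_ker.mpr h)
    rcases hnz.lt_or_gt with h | h
    · exact h
    exfalso
    set U := ⋂ H ∈ A.erase (ker (α i)), ((H : Set (Fin ℓ → ℝ))ᶜ) with hU
    have hUopen : IsOpen U := by
      rw [hU]
      exact Set.Finite.isOpen_biInter (Finset.finite_toSet _)
        (fun H _ => (Submodule.closed_of_finiteDimensional H).isOpen_compl)
    have hwU : w ∈ U := by
      rw [hU, Set.mem_iInter₂]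
      intro H hH
      obtain ⟨hne, hA'⟩ := Finset.mem_erase.mp hH
      exact hwnot H hA' hne
    obtain ⟨ε, hε, hball⟩ := Metric.isOpen_iff.mp hUopen w hwU
    set P := Metric.ball w ε ∩ {v : Fin ℓ → ℝ | 0 < α i v} with hP
    have hPpre : IsPreconnected P := ((convex_ball w ε).inter
      (convex_halfSpace_gt (α i).isLinear 0)).isPreconnected
    have hPM : P ⊆ M := by
      rintro v ⟨hv1, hv2⟩
      rw [hMmem]
      intro H hHA hvH
      by_cases hHi : H = ker (α i)
      · rw [hHi] at hvH
        simp only [Set.mem_setOf_eq] at hv2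
        have h0 : α i v = 0 := LinearMap.mem_ker.mp hvH
        linarith
      · have hin := hball hv1
        rw [hU, Set.mem_iInter₂] at hin
        exact hin H (Finset.mem_erase.mpr ⟨hHi, hHA⟩) hvH
    set t1 := ε / (2 * (‖x‖ + 1)) with ht1
    set t2 := ε / (2 * (‖z‖ + 1)) with ht2
    have ht1p : 0 < t1 := by rw [ht1]; positivity
    have ht2p : 0 < t2 := by rw [ht2]; positivity
    have hballmem : ∀ u : Fin ℓ → ℝ, ∀ t : ℝ, 0 < t → t * ‖u‖ < ε →
        w + t • u ∈ Metric.ball w ε := by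
      intro u t ht hlt
      rw [Metric.mem_ball, dist_comm, dist_self_add_right, norm_smul, Real.norm_eq_abs,
        abs_of_pos ht]
      exact hlt
    have hb1 : w + t1 • x ∈ Metric.ball w ε := by
      apply hballmem x t1 ht1p
      rw [ht1, div_mul_eq_mul_div, div_lt_iff₀ (by positivity)]
      nlinarith [norm_nonneg x]
    have hb2 : w + t2 • z ∈ Metric.ball w ε := by
      apply hballmem z t2 ht2p
      rw [ht2, div_mul_eq_mul_div, div_lt_iff₀ (by positivity)]
      nlinarith [norm_nonneg z]
    have hαx : 0 < α i x := hCpos x hxC i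
    have hp1P : w + t1 • x ∈ P := by
      refine ⟨hb1, ?_⟩
      simp only [Set.mem_setOf_eq, map_add, map_smul, smul_eq_mul, hwi]
      nlinarith
    have hp2P : w + t2 • z ∈ P := by
      refine ⟨hb2, ?_⟩
      simp only [Set.mem_setOf_eq, map_add, map_smul, smul_eq_mul, hwi]
      nlinarith
    have hp1C : w + t1 • x ∈ C := hptC t1 ht1p
    have hp2Ci : w + t2 • z ∈ Ci := hptCi z hz t2 ht2p
    have hsub : P ⊆ connectedComponentIn M (w + t1 • x) :=
      hPpre.subset_connectedComponentIn hp1P hPM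
    have hCeq2 : C = connectedComponentIn M (w + t1 • x) := by
      rw [hCx]
      exact connectedComponentIn_eq (by rw [← hCx]; exact hp1C)
    have hmemC : w + t2 • z ∈ C := by
      rw [hCeq2]
      exact hsub hp2P
    have hCieq2 : Ci = connectedComponentIn M (w + t2 • z) := by
      rw [hCix]
      exact connectedComponentIn_eq (by rw [← hCix]; exact hp2Ci)
    have hCeq3 : C = connectedComponentIn M (w + t2 • z) := by
      rw [hCeq2]
      exact connectedComponentIn_eq (by rw [← hCeq2]; exact hmemC)
    exact hCine (hCieq2.trans hCeq3.symm)
  exact ⟨hb, hβCi, hαiCi⟩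
set_option maxHeartbeats 2000000 in
lemma aux_main (A : Finset (Submodule ℝ (Fin ℓ → ℝ)))
    (hhyp : ∀ H ∈ A, IsLinHyperplane H)
    (α : Fin ℓ → ((Fin ℓ → ℝ) →ₗ[ℝ] ℝ))
    (hAk : ∀ k, ker (α k) ∈ A)
    (hα0 : ∀ k, α k ≠ 0)
    (i j : Fin ℓ) (hkerij : ker (α i) ≠ ker (α j))
    (C : Set (Fin ℓ → ℝ)) (hC : IsChamberOf A C)
    (hCeq : C = ⋂ k, {v | 0 < α k v})
    (Ci : Set (Fin ℓ → ℝ)) (ci : Fin ℓ → ℝ)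
    (hCi : IsAdjChamber A C Ci (ker (α i)))
    (hCieq : Ci = ⋂ k, {v | 0 < (α k - ci k • α i) v})
    (hwall : IsWallOf A Ci (ker (α j - ci j • α i)))
    (Cj : Set (Fin ℓ → ℝ)) (cj : Fin ℓ → ℝ)
    (hCj : IsAdjChamber A C Cj (ker (α j)))
    (hCjeq : Cj = ⋂ k, {v | 0 < (α k - cj k • α j) v})
    (H : Submodule ℝ (Fin ℓ → ℝ)) (hHA : H ∈ A)
    (hHX : ker (α i) ⊓ ker (α j) ≤ H)
    (hHi : H ≠ ker (α i)) (hHj : H ≠ ker (α j)) :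
    ci j ≠ 0 := by
  intro hcij
  classical
  obtain ⟨x, hxM, hCx⟩ := hC
  have hxC : x ∈ C := by rw [hCx]; exact mem_connectedComponentIn hxM
  have hCM : C ⊆ (⋃ H ∈ A, (H : Set (Fin ℓ → ℝ)))ᶜ := by
    rw [hCx]; exact connectedComponentIn_subset _ x
  have hCdisj : ∀ v ∈ C, ∀ H' ∈ A, v ∉ H' := by
    intro v hv
    have h := hCM hv; simpa using h
  obtain ⟨f0, hf00, hf0k⟩ := hhyp H hHA
  have hC0 : ∀ v ∈ C, f0 v ≠ 0 := fun v hv h =>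
    hCdisj v hv H hHA (by rw [hf0k]; exact LinearMap.mem_ker.mpr h)
  have hpre : IsPreconnected C := by rw [hCx]; exact isPreconnected_connectedComponentIn
  set β := if 0 < f0 x then f0 else -f0 with hβ
  have hβk : ker β = ker f0 := by
    rw [hβ]; split
    · rfl
    · ext v; simp [LinearMap.mem_ker]
  have hβx : 0 < β x := by
    rcases (hC0 x hxC).lt_or_gt with h1 | h1
    · rw [hβ, if_neg (by linarith)]
      simpa using h1
    · rw [hβ, if_pos h1]; exact h1
  have hβnz : ∀ v ∈ C, β v ≠ 0 := by
    intro v hv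
    rw [hβ]; split
    · exact hC0 v hv
    · simpa using hC0 v hv
  have hβC : ∀ v ∈ C, 0 < β v := aux_pos C hpre β hβnz hxC hβx
  have hXle : ker (α i) ⊓ ker (α j) ≤ ker β := by
    rw [hβk, ← hf0k]; exact hHX
  obtain ⟨a, b, hab⟩ := aux_span_two (hα0 i) (hα0 j) hkerij hXle
  have hβA : ker β ∈ A := by rw [hβk, ← hf0k]; exact hHA
  have hβi : ker β ≠ ker (α i) := by rw [hβk, ← hf0k]; exact hHi
  have hβj : ker β ≠ ker (α j) := by rw [hβk, ← hf0k]; exact hHj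
  obtain ⟨hb, hβCi, hαiCi⟩ := aux_sign A hhyp α hAk hα0 i j hkerij C ⟨x, hxM, hCx⟩ hCeq
    Ci ci hCi hCieq β a b hβA hβi hβC hab
  have hab' : β = b • α j + a • α i := by rw [hab, add_comm]
  obtain ⟨ha, hβCj, hαjCj⟩ := aux_sign A hhyp α hAk hα0 j i hkerij.symm C ⟨x, hxM, hCx⟩ hCeq
    Cj cj hCj hCjeq β b a hβA hβj hβC hab'
  rw [hcij, zero_smul, sub_zero] at hwall
  have hβcl : ∀ v ∈ closure Ci, 0 ≤ β v := by
    have hcl : IsClosed {v : Fin ℓ → ℝ | 0 ≤ β v} :=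
      isClosed_le continuous_const β.continuous_of_finiteDimensional
    exact fun v hv => closure_minimal (fun u hu => (hβCi u hu).le) hcl hv
  have hαicl : ∀ v ∈ closure Ci, α i v ≤ 0 := by
    have hcl : IsClosed {v : Fin ℓ → ℝ | α i v ≤ 0} :=
      isClosed_le (α i).continuous_of_finiteDimensional continuous_const
    exact fun v hv => closure_minimal (fun u hu => (hαiCi u hu).le) hcl hv
  have hspanle : Submodule.span ℝ ((ker (α j) : Set (Fin ℓ → ℝ)) ∩ closure Ci) ≤
      ker (α i) ⊓ ker (α j) := by
    rw [Submodule.span_le]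
    rintro v ⟨hv1, hv2⟩
    have hvj : α j v = 0 := LinearMap.mem_ker.mp hv1
    have h1 : 0 ≤ β v := hβcl v hv2
    have h2 : α i v ≤ 0 := hαicl v hv2
    have hβv : β v = a * α i v := by rw [hab]; simp [hvj]
    have hvi : α i v = 0 := by nlinarith
    exact Submodule.mem_inf.mpr ⟨LinearMap.mem_ker.mpr hvi, LinearMap.mem_ker.mpr hvj⟩
  have hri := aux_finrank_ker (hα0 i)
  have hrj := aux_finrank_ker (hα0 j)
  have hsupk : ker (α i) ⊔ ker (α j) = ⊤ := by
    rcases (le_sup_left : ker (α i) ≤ ker (α i) ⊔ ker (α j)).lt_or_eq with hlt | heq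
    · have h1 : finrank ℝ (ker (α i)) <
          finrank ℝ ↥(ker (α i) ⊔ ker (α j)) := Submodule.finrank_lt_finrank_of_lt hlt
      have h2 : finrank ℝ ↥(ker (α i) ⊔ ker (α j)) ≤ ℓ := by
        simpa [Module.finrank_fin_fun] using Submodule.finrank_le (ker (α i) ⊔ ker (α j))
      apply Submodule.eq_top_of_finrank_eq
      rw [Module.finrank_fin_fun]
      omega
    · exfalso
      have hle : ker (α j) ≤ ker (α i) := heq ▸ le_sup_right
      exact hkerij (aux_ker_eq (hα0 j) (hα0 i) hle).symm
  have hXrank : finrank ℝ ↥(ker (α i) ⊓ ker (α j)) + 2 = ℓ := by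
    have h := Submodule.finrank_sup_add_finrank_inf_eq (ker (α i)) (ker (α j))
    rw [hsupk, finrank_top, Module.finrank_fin_fun] at h
    omega
  have hw2 := hwall.2
  rw [Module.finrank_fin_fun] at hw2
  have hle2 : finrank ℝ ↥(Submodule.span ℝ ((ker (α j) : Set (Fin ℓ → ℝ)) ∩ closure Ci)) ≤
      finrank ℝ ↥(ker (α i) ⊓ ker (α j)) := Submodule.finrank_mono hspanle
  omega
lemma aux_case {f g : (Fin ℓ → ℝ) →ₗ[ℝ] ℝ} (hf : f ≠ 0) (hg : g ≠ 0)
    (hk : ker f ≠ ker g) (c : ℝ)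
    (h : ker (g - c • f) = ker f ∨ ker (g - c • f) = ker g) : c = 0 := by
  rcases h with h | h
  · exfalso
    have hle : ker f ≤ ker (g - c • f) := le_of_eq h.symm
    obtain ⟨e, he⟩ := aux_ker_le hf hle
    have hgf : g = (e + c) • f := by
      rw [add_smul, ← he]; abel
    exact aux_smul_ne hg hk.symm _ hgf
  · by_contra hc
    have hle : ker g ≤ ker (g - c • f) := le_of_eq h.symm
    obtain ⟨e, he⟩ := aux_ker_le hg hle
    have h3 : g - e • g = c • f := by rw [← he]; abel
    have h2 : f = (c⁻¹ * (1 - e)) • g := by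
      rw [mul_smul, sub_smul, one_smul, h3, smul_smul, inv_mul_cancel₀ hc, one_smul]
    exact aux_smul_ne hf hk _ h2
end AuxCD

section FinalProof
open LinearMap Module

set_option maxHeartbeats 2000000 in
/-- For `i ≠ j`: `c^K_{ij} = c^K_{ji} = 0` iff `|A_{αᵢ^⊥ ∩ αⱼ^⊥}| = 2`; and if
`|A_{αᵢ^⊥ ∩ αⱼ^⊥}| = 3`, then `c^K_{ji} = 1 / c^K_{ij}`, and in particular
`c^K_{ij} = -1` implies `c^K_{ji} = -1`. -/
theorem adjacent_coeffs_dichotomy (ℓ : ℕ)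
    (A : Finset (Submodule ℝ (Fin ℓ → ℝ)))
    (hhyp : ∀ H ∈ A, IsLinHyperplane H) (hsimp : IsSimplicialArr A)
    (C : Set (Fin ℓ → ℝ)) (hC : IsChamberOf A C)
    (α : Fin ℓ → ((Fin ℓ → ℝ) →ₗ[ℝ] ℝ)) (hα : IsChamberBasis A C α)
    (i j : Fin ℓ) (hij : i ≠ j)
    (Ci : Set (Fin ℓ → ℝ)) (hCi : IsAdjChamber A C Ci (LinearMap.ker (α i)))
    (ci : Fin ℓ → ℝ) (hciB : IsChamberBasis A Ci (fun k => α k - ci k • α i))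
    (Cj : Set (Fin ℓ → ℝ)) (hCj : IsAdjChamber A C Cj (LinearMap.ker (α j)))
    (cj : Fin ℓ → ℝ) (hcjB : IsChamberBasis A Cj (fun k => α k - cj k • α j)) :
    ((ci j = 0 ∧ cj i = 0) ↔
        (locArr A (LinearMap.ker (α i) ⊓ LinearMap.ker (α j))).card = 2) ∧
      ((locArr A (LinearMap.ker (α i) ⊓ LinearMap.ker (α j))).card = 3 →
        cj i = 1 / ci j ∧ (ci j = -1 → cj i = -1)) := by

  classical
  have hα0 : ∀ k, α k ≠ 0 := by
    intro k hk0
    obtain ⟨f, hf0, hfk⟩ := hhyp _ ((hα.1 k).1)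
    obtain ⟨v, hv⟩ : ∃ v, f v ≠ 0 := by
      by_contra hc; push_neg at hc
      exact hf0 (LinearMap.ext fun v => by simp [hc v])
    have hvk : v ∈ ker f := by
      rw [← hfk, hk0]
      simp
    exact hv (LinearMap.mem_ker.mp hvk)
  have hkerij : ker (α i) ≠ ker (α j) := fun h => hij (hα.2.2.1 h)
  have hAk : ∀ k, ker (α k) ∈ A := fun k => (hα.1 k).1
  have hCeq : C = ⋂ k, {v | 0 < α k v} := hα.2.2.2
  have hCieq : Ci = ⋂ k, {v | 0 < (α k - ci k • α i) v} := hciB.2.2.2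
  have hCjeq : Cj = ⋂ k, {v | 0 < (α k - cj k • α j) v} := hcjB.2.2.2
  set X := ker (α i) ⊓ ker (α j) with hX
  have hXi : ker (α i) ∈ locArr A X := by
    simp only [locArr, Finset.mem_filter]
    exact ⟨hAk i, inf_le_left⟩
  have hXj : ker (α j) ∈ locArr A X := by
    simp only [locArr, Finset.mem_filter]
    exact ⟨hAk j, inf_le_right⟩
  have hpairX : ({ker (α i), ker (α j)} : Finset (Submodule ℝ (Fin ℓ → ℝ))) ⊆ locArr A X := by
    intro H hH
    rcases Finset.mem_insert.mp hH with rfl | hH'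
    · exact hXi
    · rw [Finset.mem_singleton.mp hH']; exact hXj
  have hpaircard :
      ({ker (α i), ker (α j)} : Finset (Submodule ℝ (Fin ℓ → ℝ))).card = 2 :=
    Finset.card_pair hkerij
  have hMAINi : ∀ H ∈ locArr A X, H ≠ ker (α i) → H ≠ ker (α j) → ci j ≠ 0 := by
    intro H hH h1 h2
    simp only [locArr, Finset.mem_filter] at hH
    exact aux_main A hhyp α hAk hα0 i j hkerij C hC hCeq Ci ci hCi hCieq (hciB.1 j)
      Cj cj hCj hCjeq H hH.1 hH.2 h1 h2
  have hMAINj : ∀ H ∈ locArr A X, H ≠ ker (α i) → H ≠ ker (α j) → cj i ≠ 0 := by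
    intro H hH h1 h2
    simp only [locArr, Finset.mem_filter] at hH
    exact aux_main A hhyp α hAk hα0 j i hkerij.symm C hC hCeq Cj cj hCj hCjeq (hcjB.1 i)
      Ci ci hCi hCieq H hH.1 ((inf_comm (ker (α j)) (ker (α i))).le.trans hH.2) h2 h1
  have hγiX : ker (α j - ci j • α i) ∈ locArr A X := by
    simp only [locArr, Finset.mem_filter]
    refine ⟨(hciB.1 j).1, ?_⟩
    intro v hv
    obtain ⟨hvi, hvj⟩ := Submodule.mem_inf.mp hv
    rw [LinearMap.mem_ker] at hvi hvj ⊢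
    simp [hvi, hvj]
  have hγjX : ker (α i - cj i • α j) ∈ locArr A X := by
    simp only [locArr, Finset.mem_filter]
    refine ⟨(hcjB.1 i).1, ?_⟩
    intro v hv
    obtain ⟨hvi, hvj⟩ := Submodule.mem_inf.mp hv
    rw [LinearMap.mem_ker] at hvi hvj ⊢
    simp [hvi, hvj]
  constructor
  · constructor
    · rintro ⟨h1, _h2⟩
      have hsub : locArr A X ⊆ {ker (α i), ker (α j)} := by
        intro H hH
        by_contra hnot
        simp only [Finset.mem_insert, Finset.mem_singleton, not_or] at hnot
        exact hMAINi H hH hnot.1 hnot.2 h1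
      have c1 := Finset.card_le_card hsub
      have c2 := Finset.card_le_card hpairX
      omega
    · intro hcard
      have heq : locArr A X = {ker (α i), ker (α j)} :=
        (Finset.eq_of_subset_of_card_le hpairX (by rw [hcard, hpaircard])).symm
      constructor
      · apply aux_case (hα0 i) (hα0 j) hkerij
        have hmem := heq ▸ hγiX
        rcases Finset.mem_insert.mp hmem with h' | h'
        · exact Or.inl h'
        · exact Or.inr (Finset.mem_singleton.mp h')
      · apply aux_case (hα0 j) (hα0 i) hkerij.symm
        have hmem := heq ▸ hγjX
        rcases Finset.mem_insert.mp hmem with h' | h'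
        · exact Or.inr h'
        · exact Or.inl (Finset.mem_singleton.mp h')
  · intro hcard3
    have hss : ({ker (α i), ker (α j)} : Finset (Submodule ℝ (Fin ℓ → ℝ))) ⊂ locArr A X := by
      rw [Finset.ssubset_iff_subset_ne]
      refine ⟨hpairX, ?_⟩
      intro h
      rw [← h, hpaircard] at hcard3
      omega
    obtain ⟨H, hHloc, hHpair⟩ := Finset.exists_of_ssubset hss
    simp only [Finset.mem_insert, Finset.mem_singleton, not_or] at hHpair
    have hcij : ci j ≠ 0 := hMAINi H hHloc hHpair.1 hHpair.2
    have hcji : cj i ≠ 0 := hMAINj H hHloc hHpair.1 hHpair.2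
    have hγi1 : ker (α j - ci j • α i) ≠ ker (α i) :=
      fun h => hcij (aux_case (hα0 i) (hα0 j) hkerij _ (Or.inl h))
    have hγi2 : ker (α j - ci j • α i) ≠ ker (α j) :=
      fun h => hcij (aux_case (hα0 i) (hα0 j) hkerij _ (Or.inr h))
    have hγj1 : ker (α i - cj i • α j) ≠ ker (α j) :=
      fun h => hcji (aux_case (hα0 j) (hα0 i) hkerij.symm _ (Or.inl h))
    have hγj2 : ker (α i - cj i • α j) ≠ ker (α i) :=
      fun h => hcji (aux_case (hα0 j) (hα0 i) hkerij.symm _ (Or.inr h))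
    set T : Finset (Submodule ℝ (Fin ℓ → ℝ)) :=
      insert (ker (α j - ci j • α i)) {ker (α i), ker (α j)} with hT
    have hTsub : T ⊆ locArr A X := by
      intro H' hH'
      rcases Finset.mem_insert.mp hH' with rfl | h'
      · exact hγiX
      · exact hpairX h'
    have hTcard : T.card = 3 := by
      rw [hT, Finset.card_insert_of_notMem (by simp [hγi1, hγi2]), hpaircard]
    have hTeq : T = locArr A X :=
      Finset.eq_of_subset_of_card_le hTsub (by rw [hcard3, hTcard])
    have hγjT : ker (α i - cj i • α j) ∈ T := by rw [hTeq]; exact hγjX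
    have hγeq : ker (α i - cj i • α j) = ker (α j - ci j • α i) := by
      rcases Finset.mem_insert.mp hγjT with h' | h'
      · exact h'
      · rcases Finset.mem_insert.mp h' with h'' | h''
        · exact absurd h'' hγj2
        · exact absurd (Finset.mem_singleton.mp h'') hγj1
    have hγi0 : α j - ci j • α i ≠ 0 := by
      intro h0
      rw [sub_eq_zero] at h0
      exact aux_smul_ne (hα0 j) hkerij.symm _ h0
    obtain ⟨e, he⟩ := aux_ker_le hγi0 (le_of_eq hγeq.symm)
    have hcomb : (1 + e * ci j) • α i + (-(cj i) - e) • α j = 0 := by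
      apply LinearMap.ext
      intro v
      have hv := LinearMap.congr_fun he v
      simp only [LinearMap.sub_apply, LinearMap.smul_apply, LinearMap.add_apply,
        LinearMap.zero_apply, smul_eq_mul] at hv ⊢
      ring_nf
      ring_nf at hv
      linarith
    obtain ⟨h1, h2⟩ := aux_indep (hα0 i) (hα0 j) hkerij hcomb
    have he' : e = -(cj i) := by linarith
    have hprod : cj i * ci j = 1 := by
      rw [he'] at h1
      ring_nf at h1
      linarith
    constructor
    · exact (eq_div_iff hcij).mpr hprod
    · intro hm1
      rw [hm1] at hprod
      linarith

end FinalProof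
end

section
/- Let A be an irreducible supersolvable simplicial 3-arrangement in ℝ^3 and X ∈ L_2(A) a modular element. Then |A_X| ≥ 3. -/
open scoped Classical

section AuxProof

open Module

private lemma aux_finrank_V3 : Module.finrank ℝ (Fin 3 → ℝ) = 3 := by simp

private lemma aux_hyp_rank {H : Submodule ℝ (Fin 3 → ℝ)} (h : IsLinHyperplane H) :
    Module.finrank ℝ H = 2 := by
  obtain ⟨f, hf, rfl⟩ := h
  have h1 := LinearMap.finrank_range_add_finrank_ker f
  have h2 : LinearMap.range f ≠ ⊥ := fun h => hf (LinearMap.range_eq_bot.mp h)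
  have h3 : finrank ℝ (LinearMap.range f) ≤ 1 := by
    simpa using Submodule.finrank_le (LinearMap.range f)
  have h4 : finrank ℝ (LinearMap.range f) ≠ 0 := by
    exact fun h => h2 (Submodule.finrank_eq_zero.mp h)
  have h5 : finrank ℝ (Fin 3 → ℝ) = 3 := by simp
  omega

private lemma aux_line_eq {P Q : Submodule ℝ (Fin 3 → ℝ)} (hP : Module.finrank ℝ P = 1)
    (hQ : Module.finrank ℝ Q = 1) (h : P ≤ Q) : P = Q :=
  Submodule.eq_of_le_of_finrank_le h (by omega)

private lemma aux_inf_rank {H₁ H₂ : Submodule ℝ (Fin 3 → ℝ)} (h1 : Module.finrank ℝ H₁ = 2)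
    (h2 : Module.finrank ℝ H₂ = 2) (hne : H₁ ≠ H₂) : Module.finrank ℝ ↥(H₁ ⊓ H₂) = 1 := by
  have hs := Submodule.finrank_sup_add_finrank_inf_eq H₁ H₂
  have hne2 : ¬ H₂ ≤ H₁ := fun h =>
    hne (Submodule.eq_of_le_of_finrank_le h (by omega)).symm
  have hlt : H₁ < H₁ ⊔ H₂ :=
    lt_of_le_of_ne le_sup_left (fun h => hne2 (h ▸ (le_sup_right : H₂ ≤ H₁ ⊔ H₂)))
  have h3 : Module.finrank ℝ H₁ < Module.finrank ℝ ↥(H₁ ⊔ H₂) :=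
    Submodule.finrank_lt_finrank_of_lt hlt
  have h4 : Module.finrank ℝ ↥(H₁ ⊔ H₂) ≤ 3 := by
    have := Submodule.finrank_le (H₁ ⊔ H₂)
    rwa [aux_finrank_V3] at this
  omega

private lemma aux_pair_mem_interLat (A : Finset (Submodule ℝ (Fin 3 → ℝ)))
    {G G' : Submodule ℝ (Fin 3 → ℝ)} (hG : G ∈ A) (hG' : G' ∈ A) : G ⊓ G' ∈ interLat A := by
  simp only [interLat, Finset.mem_image, Finset.mem_powerset]
  exact ⟨{G, G'}, by simp [Finset.insert_subset_iff, hG, hG'], by simp⟩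

private lemma aux_interLat_rank2_mem {A : Finset (Submodule ℝ (Fin 3 → ℝ))}
    (hhyp : ∀ H ∈ A, IsLinHyperplane H) {Z : Submodule ℝ (Fin 3 → ℝ)} (hZ : Z ∈ interLat A)
    (hr : Module.finrank ℝ Z = 2) : Z ∈ A := by
  simp only [interLat, Finset.mem_image, Finset.mem_powerset] at hZ
  obtain ⟨S, hS, rfl⟩ := hZ
  rcases S.eq_empty_or_nonempty with rfl | ⟨H, hH⟩
  · rw [Finset.inf_empty, finrank_top, aux_finrank_V3] at hr; omega
  · have hle : S.inf id ≤ H := Finset.inf_le hH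
    have hHA : H ∈ A := hS hH
    have h2 := aux_hyp_rank (hhyp H hHA)
    rw [Submodule.eq_of_le_of_finrank_le hle (by omega)]
    exact hHA

end AuxProof

/-- In an irreducible supersolvable simplicial 3-arrangement, every rank-2 modular
element `X` satisfies `|A_X| ≥ 3`. -/
theorem modular_localization_ge_three (A : Finset (Submodule ℝ (Fin 3 → ℝ)))
    (hhyp : ∀ H ∈ A, IsLinHyperplane H)
    (hirr : ¬ IsReducibleArr A)
    (hss : IsSupersolvableArr A) (hsimp : IsSimplicialArr A)
    (X : Submodule ℝ (Fin 3 → ℝ))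
    (hX2 : Module.finrank ℝ ((Fin 3 → ℝ) ⧸ X) = 2)
    (hXmod : IsModularFlat A X) :
    3 ≤ (locArr A X).card := by
  classical
  by_contra hcard
  push_neg at hcard
  apply hirr
  -- rank of X is 1
  have hXr : Module.finrank ℝ X = 1 := by
    have hq := Submodule.finrank_quotient_add_finrank X
    rw [hX2, aux_finrank_V3] at hq; omega
  obtain ⟨hXin, hmod⟩ := hXmod
  -- ranks of hyperplanes
  have hAr : ∀ H ∈ A, Module.finrank ℝ H = 2 := fun H hH => aux_hyp_rank (hhyp H hH)
  -- membership in locArr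
  have hlocmem : ∀ H, H ∈ locArr A X ↔ H ∈ A ∧ X ≤ H := fun H => Finset.mem_filter
  -- X is the intersection of some S ⊆ locArr A X
  simp only [interLat, Finset.mem_image, Finset.mem_powerset] at hXin
  obtain ⟨S, hSA, hXeq⟩ := hXin
  have hSloc : S ⊆ locArr A X := fun H hH =>
    (hlocmem H).mpr ⟨hSA hH, hXeq ▸ Finset.inf_le hH⟩
  -- locArr A X has at least two elements
  have h2le : 2 ≤ (locArr A X).card := by
    by_contra h
    push_neg at h
    have hS1 : S.card ≤ 1 := le_trans (Finset.card_le_card hSloc) (by omega)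
    rcases Finset.card_le_one_iff_subset_singleton.mp hS1 with ⟨H, hHsub⟩
    rcases Finset.subset_singleton_iff.mp hHsub with rfl | rfl
    · simp only [Finset.inf_empty] at hXeq
      rw [← hXeq] at hXr
      simp [aux_finrank_V3] at hXr
    · simp only [Finset.inf_singleton, id] at hXeq
      have hHA : H ∈ A := hSA (Finset.mem_singleton_self H)
      have := hAr H hHA
      rw [hXeq, hXr] at this
      omega
  have hc2 : (locArr A X).card = 2 := by omega
  obtain ⟨H₁, H₂, hH12, hloceq⟩ := Finset.card_eq_two.mp hc2
  have hmem1 : H₁ ∈ locArr A X := by rw [hloceq]; simp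
  have hmem2 : H₂ ∈ locArr A X := by rw [hloceq]; simp
  obtain ⟨hH1A, hXle1⟩ := (hlocmem H₁).mp hmem1
  obtain ⟨hH2A, hXle2⟩ := (hlocmem H₂).mp hmem2
  have hr1 : Module.finrank ℝ H₁ = 2 := hAr H₁ hH1A
  have hr2 : Module.finrank ℝ H₂ = 2 := hAr H₂ hH2A
  -- X = H₁ ⊓ H₂
  have hXinf : X = H₁ ⊓ H₂ :=
    aux_line_eq hXr (aux_inf_rank hr1 hr2 hH12) (le_inf hXle1 hXle2)
  -- key modularity fact: any intersection line other than X lies in H₁ or H₂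
  have key : ∀ G ∈ A, ∀ G' ∈ A, G ≠ G' → G ⊓ G' ≠ X →
      (G ⊓ G' ≤ H₁ ∨ G ⊓ G' ≤ H₂) := by
    intro G hG G' hG' hne' hneX
    have hYr : Module.finrank ℝ ↥(G ⊓ G') = 1 := aux_inf_rank (hAr G hG) (hAr G' hG') hne'
    have hsupmem : X ⊔ (G ⊓ G') ∈ interLat A := hmod _ (aux_pair_mem_interLat A hG hG')
    have hinf0 : Module.finrank ℝ ↥(X ⊓ (G ⊓ G')) = 0 := by
      have hle : Module.finrank ℝ ↥(X ⊓ (G ⊓ G')) ≤ 1 := by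
        have := Submodule.finrank_mono (inf_le_left : X ⊓ (G ⊓ G') ≤ X)
        omega
      rcases Nat.lt_or_ge (Module.finrank ℝ ↥(X ⊓ (G ⊓ G'))) 1 with h | h
      · omega
      · exfalso
        have h1 : Module.finrank ℝ ↥(X ⊓ (G ⊓ G')) = 1 := by omega
        have hXY : X ⊓ (G ⊓ G') = X := aux_line_eq h1 hXr inf_le_left
        have hXle : X ≤ G ⊓ G' := by rw [← hXY]; exact inf_le_right
        exact hneX (aux_line_eq hXr hYr hXle).symm
    -- rank of X ⊔ (G ⊓ G') is 2
    have hsupr : Module.finrank ℝ ↥(X ⊔ (G ⊓ G')) = 2 := by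
      have hs := Submodule.finrank_sup_add_finrank_inf_eq X (G ⊓ G')
      rw [hXr, hYr, hinf0] at hs
      omega
    have hsupA : X ⊔ (G ⊓ G') ∈ A := aux_interLat_rank2_mem hhyp hsupmem hsupr
    have hsuploc : X ⊔ (G ⊓ G') ∈ locArr A X := (hlocmem _).mpr ⟨hsupA, le_sup_left⟩
    rw [hloceq] at hsuploc
    simp only [Finset.mem_insert, Finset.mem_singleton] at hsuploc
    rcases hsuploc with h | h
    · exact Or.inl (h ▸ (le_sup_right : G ⊓ G' ≤ X ⊔ (G ⊓ G')))
    · exact Or.inr (h ▸ (le_sup_right : G ⊓ G' ≤ X ⊔ (G ⊓ G')))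
  -- building blocks for reducibility
  have mkCompl : ∀ W q : Submodule ℝ (Fin 3 → ℝ), Module.finrank ℝ W = 2 →
      Module.finrank ℝ q = 1 → ¬ q ≤ W → IsCompl W q := by
    intro W q hW hq hnle
    have hinf : W ⊓ q = ⊥ := by
      rcases Nat.lt_or_ge (Module.finrank ℝ ↥(W ⊓ q)) 1 with h | h
      · rw [← Submodule.finrank_eq_zero (R := ℝ) (M := Fin 3 → ℝ)]; omega
      · exfalso
        have hle : Module.finrank ℝ ↥(W ⊓ q) ≤ 1 := by
          have := Submodule.finrank_mono (inf_le_right : W ⊓ q ≤ q); omega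
        have h1 : Module.finrank ℝ ↥(W ⊓ q) = 1 := by omega
        have : W ⊓ q = q := aux_line_eq h1 hq inf_le_right
        exact hnle (this ▸ inf_le_left)
    have hsup : W ⊔ q = ⊤ := by
      apply Submodule.eq_top_of_finrank_eq
      have hs := Submodule.finrank_sup_add_finrank_inf_eq W q
      rw [hW, hq, hinf] at hs
      simp only [finrank_bot] at hs
      rw [aux_finrank_V3]
      omega
    exact ⟨disjoint_iff.mpr hinf, codisjoint_iff.mpr hsup⟩
  have hXnebot : X ≠ ⊥ := by
    intro h; rw [h] at hXr; simp at hXr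
  -- the set B of hyperplanes not containing X
  set B := A.filter (fun H => ¬ X ≤ H) with hBdef
  have hBmem : ∀ g, g ∈ B ↔ g ∈ A ∧ ¬ X ≤ g := fun g => Finset.mem_filter
  -- case analysis on B
  by_cases hB2 : ∃ g₀ ∈ B, ∃ g₁ ∈ B, g₀ ≠ g₁
  · obtain ⟨g₀, hg₀, g₁, hg₁, hgne⟩ := hB2
    obtain ⟨hg₀A, hg₀X⟩ := (hBmem g₀).mp hg₀
    obtain ⟨hg₁A, hg₁X⟩ := (hBmem g₁).mp hg₁
    -- the common point
    set q := g₀ ⊓ g₁ with hqdef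
    have hqr : Module.finrank ℝ ↥q = 1 := aux_inf_rank (hAr _ hg₀A) (hAr _ hg₁A) hgne
    -- lines in B have intersections ≠ X
    have hBne : ∀ g ∈ B, ∀ g' ∈ B, g ⊓ g' ≠ X := by
      intro g hg g' hg' h
      exact ((hBmem g).mp hg).2 (h ▸ inf_le_left)
    have hqX : q ≠ X := hBne g₀ hg₀ g₁ hg₁
    -- no two distinct lines inside g ∈ B can lie in the same Hᵢ
    have noshare : ∀ W, (W = H₁ ∨ W = H₂) → ∀ g ∈ B, ∀ u v : Submodule ℝ (Fin 3 → ℝ),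
        Module.finrank ℝ u = 1 → Module.finrank ℝ v = 1 →
        u ≤ g → v ≤ g → u ≤ W → v ≤ W → u = v := by
      intro W hW g hg u v hu hv hug hvg huW hvW
      obtain ⟨hgA, hgX⟩ := (hBmem g).mp hg
      have hWA : W ∈ A ∧ X ≤ W := by
        rcases hW with rfl | rfl
        · exact ⟨hH1A, hXle1⟩
        · exact ⟨hH2A, hXle2⟩
      have hgW : g ≠ W := fun h => hgX (h ▸ hWA.2)
      have hr : Module.finrank ℝ ↥(g ⊓ W) = 1 := aux_inf_rank (hAr _ hgA) (hAr _ hWA.1) hgW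
      have h1 : u = g ⊓ W := aux_line_eq hu hr (le_inf hug huW)
      have h2 : v = g ⊓ W := aux_line_eq hv hr (le_inf hvg hvW)
      rw [h1, h2]
    -- concurrency: q lies in every element of B
    have conc : ∀ g ∈ B, q ≤ g := by
      intro g hg
      obtain ⟨hgA, hgX⟩ := (hBmem g).mp hg
      by_cases h0 : g = g₀
      · exact h0 ▸ inf_le_left
      by_cases h1 : g = g₁
      · exact h1 ▸ inf_le_right
      set b := g₀ ⊓ g with hbdef
      set c := g₁ ⊓ g with hcdef
      have hbr : Module.finrank ℝ ↥b = 1 := aux_inf_rank (hAr _ hg₀A) (hAr _ hgA) (Ne.symm h0)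
      have hcr : Module.finrank ℝ ↥c = 1 := aux_inf_rank (hAr _ hg₁A) (hAr _ hgA) (Ne.symm h1)
      by_cases hab : q = b
      · exact hab ▸ inf_le_right
      exfalso
      have hac : q ≠ c := fun h =>
        hab (aux_line_eq hqr hbr (le_inf inf_le_left (by rw [h]; exact inf_le_right)))
      have hbc : b ≠ c := fun h =>
        hab (aux_line_eq hbr hqr (le_inf inf_le_left (by rw [h]; exact inf_le_left))).symm
      have nqb : ∀ W, (W = H₁ ∨ W = H₂) → ¬(q ≤ W ∧ b ≤ W) := fun W hW h =>
        hab (noshare W hW g₀ hg₀ q b hqr hbr inf_le_left inf_le_left h.1 h.2)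
      have nqc : ∀ W, (W = H₁ ∨ W = H₂) → ¬(q ≤ W ∧ c ≤ W) := fun W hW h =>
        hac (noshare W hW g₁ hg₁ q c hqr hcr inf_le_right inf_le_left h.1 h.2)
      have nbc : ∀ W, (W = H₁ ∨ W = H₂) → ¬(b ≤ W ∧ c ≤ W) := fun W hW h =>
        hbc (noshare W hW g hg b c hbr hcr inf_le_right inf_le_right h.1 h.2)
      have hqd := key g₀ hg₀A g₁ hg₁A hgne hqX
      have hbd := key g₀ hg₀A g hgA (fun h => h0 h.symm) (hBne g₀ hg₀ g hg)
      have hcd := key g₁ hg₁A g hgA (fun h => h1 h.symm) (hBne g₁ hg₁ g hg)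
      have c1 := nqb H₁ (Or.inl rfl)
      have c2 := nqb H₂ (Or.inr rfl)
      have c3 := nqc H₁ (Or.inl rfl)
      have c4 := nqc H₂ (Or.inr rfl)
      have c5 := nbc H₁ (Or.inl rfl)
      have c6 := nbc H₂ (Or.inr rfl)
      rcases hqd with q1 | q2 <;> rcases hbd with b1 | b2 <;> rcases hcd with d1 | d2
      · exact c1 ⟨q1, b1⟩
      · exact c1 ⟨q1, b1⟩
      · exact c3 ⟨q1, d1⟩
      · exact c6 ⟨b2, d2⟩
      · exact c5 ⟨b1, d1⟩
      · exact c4 ⟨q2, d2⟩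
      · exact c2 ⟨q2, b2⟩
      · exact c2 ⟨q2, b2⟩
    -- q is not below both H₁ and H₂
    have hqnot12 : ¬ (q ≤ H₁ ∧ q ≤ H₂) := fun h =>
      hqX (aux_line_eq hqr hXr (by rw [hXinf]; exact le_inf h.1 h.2))
    have hqd := key g₀ hg₀A g₁ hg₁A hgne hqX
    have hqnebot : q ≠ ⊥ := fun h => by rw [h] at hqr; simp at hqr
    rcases hqd with hq1 | hq2
    · refine ⟨H₂, q, ?_, hqnebot, mkCompl H₂ q hr2 hqr (fun h => hqnot12 ⟨hq1, h⟩), ?_⟩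
      · intro h; rw [h] at hr2; simp at hr2
      · intro H hH
        by_cases hXH : X ≤ H
        · have hHl : H ∈ locArr A X := (hlocmem H).mpr ⟨hH, hXH⟩
          rw [hloceq] at hHl
          simp only [Finset.mem_insert, Finset.mem_singleton] at hHl
          rcases hHl with rfl | rfl
          · exact Or.inr hq1
          · exact Or.inl le_rfl
        · exact Or.inr (conc H ((hBmem H).mpr ⟨hH, hXH⟩))
    · refine ⟨H₁, q, ?_, hqnebot, mkCompl H₁ q hr1 hqr (fun h => hqnot12 ⟨h, hq2⟩), ?_⟩
      · intro h; rw [h] at hr1; simp at hr1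
      · intro H hH
        by_cases hXH : X ≤ H
        · have hHl : H ∈ locArr A X := (hlocmem H).mpr ⟨hH, hXH⟩
          rw [hloceq] at hHl
          simp only [Finset.mem_insert, Finset.mem_singleton] at hHl
          rcases hHl with rfl | rfl
          · exact Or.inl le_rfl
          · exact Or.inr hq2
        · exact Or.inr (conc H ((hBmem H).mpr ⟨hH, hXH⟩))
  · -- B has at most one element
    push_neg at hB2
    rcases Finset.eq_empty_or_nonempty B with hBe | ⟨g, hg⟩
    · obtain ⟨W, hW⟩ := Submodule.exists_isCompl X
      refine ⟨W, X, ?_, hXnebot, hW.symm, ?_⟩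
      · intro h
        have htop : X ⊔ W = ⊤ := codisjoint_iff.mp hW.codisjoint
        rw [h, sup_bot_eq] at htop
        rw [htop] at hXr
        simp [aux_finrank_V3] at hXr
      · intro H hH
        right
        by_contra hXH
        have : H ∈ B := (hBmem H).mpr ⟨hH, hXH⟩
        rw [hBe] at this
        exact absurd this (Finset.notMem_empty H)
    · obtain ⟨hgA, hgX⟩ := (hBmem g).mp hg
      refine ⟨g, X, ?_, hXnebot, mkCompl g X (hAr g hgA) hXr hgX, ?_⟩
      · intro h; have := hAr g hgA; rw [h] at this; simp at this
      · intro H hH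
        by_cases hXH : X ≤ H
        · exact Or.inr hXH
        · have hHB : H ∈ B := (hBmem H).mpr ⟨hH, hXH⟩
          exact Or.inl (le_of_eq (hB2 g hg H hHB))
end
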